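/- Let s > 1 and λ > s be real numbers, and define g on the interval I = (0, 1/e) by g(r) = (ln λ)^{-1} ln ln (1/r). Then ∬_{{(r_1, r_2) ∈ I × I : |g(r_1) - g(r_2)| > 1}} |r_1 - r_2|^{-(1+s)} dr_1 dr_2 < +∞. -/

import Mathlib

open MeasureTheory Real Filter ENNReal

private lemma meas_rpow_const_aux (c : ℝ) : Measurable fun x : ℝ => x ^ c :=
  measurable_of_continuousOn_compl_singleton 0
    (continuousOn_id.rpow_const fun _ hx => Or.inl hx)

/-- finiteness of the 1D nonlocal integral for the log-log function. -/
theorem stmt16 (s lam : ℝ) (hs : 1 < s) (hlam : s < lam) :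
    (∫⁻ r₁ in Set.Ioo (0 : ℝ) (1 / Real.exp 1), ∫⁻ r₂ in Set.Ioo (0 : ℝ) (1 / Real.exp 1),
        (if 1 < |(Real.log lam)⁻¹ * Real.log (Real.log (1 / r₁)) -
              (Real.log lam)⁻¹ * Real.log (Real.log (1 / r₂))| then
          ENNReal.ofReal (|r₁ - r₂| ^ (-(1 + s))) else 0)) < ⊤ := by
  have hlam1 : 1 < lam := hs.trans hlam
  have hlog : 0 < Real.log lam := Real.log_pos hlam1
  set e1 : ℝ := 1 / Real.exp 1 with he1
  have he1pos : 0 < e1 := by positivity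
  have he1lt : e1 < 1 := by
    rw [he1, div_lt_one (Real.exp_pos 1)]
    have := Real.add_one_le_exp 1; linarith
  set I : Set ℝ := Set.Ioo (0 : ℝ) e1 with hI
  -- basic facts about points of I
  have hIfacts : ∀ r ∈ I, 0 < r ∧ r < 1 ∧ 1 < Real.log (1 / r) := by
    intro r hr
    refine ⟨hr.1, hr.2.trans he1lt, ?_⟩
    have h1r : Real.exp 1 < 1 / r := by
      rw [lt_div_iff₀ hr.1]
      have h2 := hr.2
      rw [he1, lt_div_iff₀ (Real.exp_pos 1)] at h2
      linarith
    calc (1 : ℝ) = Real.log (Real.exp 1) := (Real.log_exp 1).symm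
      _ < Real.log (1 / r) := Real.log_lt_log (Real.exp_pos 1) h1r
  -- positivity of 1 - exp (1 - lam)
  have hc0 : 0 < 1 - Real.exp (1 - lam) := by
    have h1 : Real.exp (1 - lam) < Real.exp 0 := Real.exp_lt_exp.mpr (by linarith)
    rw [Real.exp_zero] at h1; linarith
  have he1exp : e1 ^ (lam - 1) = Real.exp (1 - lam) := by
    rw [he1, one_div, ← Real.exp_neg, ← Real.exp_mul]
    congr 1; ring
  -- the gap estimate: r - r^lam ≥ (1 - e^{1-lam}) r on I
  have hgap : ∀ r ∈ I, (1 - Real.exp (1 - lam)) * r ≤ r - r ^ lam := by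
    intro r hr
    have hr0 := hr.1
    have hpow : r ^ (lam - 1) ≤ Real.exp (1 - lam) := by
      calc r ^ (lam - 1) ≤ e1 ^ (lam - 1) :=
            Real.rpow_le_rpow hr0.le hr.2.le (by linarith)
        _ = Real.exp (1 - lam) := he1exp
    have hid : r * r ^ (lam - 1) = r ^ lam := by
      rw [Real.rpow_sub hr0, Real.rpow_one]
      field_simp
    have h5 : r ^ lam ≤ r * Real.exp (1 - lam) := by
      rw [← hid]
      nlinarith [hpow, hr0]
    nlinarith [h5]
  have hgap0 : ∀ r ∈ I, 0 < r - r ^ lam := fun r hr =>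
    lt_of_lt_of_le (mul_pos hc0 hr.1) (hgap r hr)
  -- main monotone comparison
  have hmain : ∀ x ∈ I, ∀ y ∈ I,
      Real.log lam < Real.log (Real.log (1 / x)) - Real.log (Real.log (1 / y)) →
      x < y ^ lam ∧ x < y := by
    intro x hx y hy hgt
    obtain ⟨hx0, hx1, hLx⟩ := hIfacts x hx
    obtain ⟨hy0, hy1, hLy⟩ := hIfacts y hy
    have hkey : lam * Real.log (1 / y) < Real.log (1 / x) := by
      have h2 : Real.log (lam * Real.log (1 / y)) < Real.log (Real.log (1 / x)) := by
        rw [Real.log_mul (by linarith) (by linarith)]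
        linarith
      have h3 := Real.exp_lt_exp.mpr h2
      rwa [Real.exp_log (by nlinarith), Real.exp_log (by linarith)] at h3
    simp only [one_div, Real.log_inv] at hkey hLx hLy
    constructor
    · have hxy : Real.log x < Real.log y * lam := by nlinarith [hkey]
      calc x = Real.exp (Real.log x) := (Real.exp_log hx0).symm
        _ < Real.exp (Real.log y * lam) := Real.exp_lt_exp.mpr hxy
        _ = y ^ lam := (Real.rpow_def_of_pos hy0 lam).symm
    · have hxy : Real.log x < Real.log y := by nlinarith [hkey, hLy]
      have h4 := Real.exp_lt_exp.mpr hxy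
      rwa [Real.exp_log hx0, Real.exp_log hy0] at h4
  -- splitting the condition
  have hsplit : ∀ x ∈ I, ∀ y ∈ I,
      (1 < |(Real.log lam)⁻¹ * Real.log (Real.log (1 / x)) -
        (Real.log lam)⁻¹ * Real.log (Real.log (1 / y))|) →
      (x < y ^ lam ∧ x < y) ∨ (y < x ^ lam ∧ y < x) := by
    intro x hx y hy hc
    rw [← mul_sub, abs_mul, abs_of_pos (inv_pos.mpr hlog)] at hc
    have hd : Real.log lam <
        |Real.log (Real.log (1 / x)) - Real.log (Real.log (1 / y))| := by
      have h2 := mul_lt_mul_of_pos_left hc hlog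
      rwa [mul_one, ← mul_assoc, mul_inv_cancel₀ hlog.ne', one_mul] at h2
    rcases lt_abs.mp hd with h | h
    · exact Or.inl (hmain x hx y hy h)
    · exact Or.inr (hmain y hy x hx (by linarith))
  -- the auxiliary functions
  set H : ℝ → ℝ≥0∞ := fun r => ENNReal.ofReal ((r - r ^ lam) ^ (-(1 + s))) with hH
  set A : ℝ → ℝ → ℝ≥0∞ := fun x y => if x < y ^ lam then H y else 0 with hA
  have hmeasH : Measurable H := by
    rw [hH]
    exact ENNReal.measurable_ofReal.comp
      ((meas_rpow_const_aux (-(1 + s))).comp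
        (measurable_id.sub (meas_rpow_const_aux lam)))
  have hmeasA : Measurable (Function.uncurry A) := by
    have hu : Function.uncurry A = fun p : ℝ × ℝ =>
        if p.1 < p.2 ^ lam then H p.2 else 0 := by
      ext p; simp [Function.uncurry, hA]
    rw [hu]
    exact Measurable.ite
      (measurableSet_lt measurable_fst ((meas_rpow_const_aux lam).comp measurable_snd))
      (hmeasH.comp measurable_snd) measurable_const
  -- pointwise bound
  have hb : ∀ x ∈ I, ∀ y ∈ I, x < y ^ lam → x < y →
      ENNReal.ofReal (|x - y| ^ (-(1 + s))) ≤ H y := by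
    intro x hx y hy h1 h2
    apply ENNReal.ofReal_le_ofReal
    have hpos := hgap0 y hy
    rw [abs_sub_comm, abs_of_pos (sub_pos.mpr h2)]
    exact Real.rpow_le_rpow_of_nonpos hpos (by linarith) (by linarith)
  set C : ℝ := (1 - Real.exp (1 - lam)) ^ (-(1 + s)) with hCdef
  -- pointwise bound for the reduced integrand
  have hpoint : ∀ x ∈ I, H x * ENNReal.ofReal (x ^ lam) ≤
      ENNReal.ofReal (C * x ^ (lam - 1 - s)) := by
    intro x hx
    have hx0 := hx.1
    have hsub := hgap x hx
    have hsubpos : 0 < (1 - Real.exp (1 - lam)) * x := mul_pos hc0 hx0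
    have h6 : (x - x ^ lam) ^ (-(1 + s)) ≤
        ((1 - Real.exp (1 - lam)) * x) ^ (-(1 + s)) :=
      Real.rpow_le_rpow_of_nonpos hsubpos hsub (by linarith)
    have h7 : ((1 - Real.exp (1 - lam)) * x) ^ (-(1 + s)) = C * x ^ (-(1 + s)) :=
      Real.mul_rpow hc0.le hx0.le
    rw [hH]
    rw [← ENNReal.ofReal_mul (Real.rpow_nonneg (le_of_lt (hgap0 x hx)) _)]
    apply ENNReal.ofReal_le_ofReal
    calc (x - x ^ lam) ^ (-(1 + s)) * x ^ lam
        ≤ C * x ^ (-(1 + s)) * x ^ lam := by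
          apply mul_le_mul_of_nonneg_right _ (Real.rpow_nonneg hx0.le lam)
          rw [← h7]; exact h6
      _ = C * x ^ (lam - 1 - s) := by
          rw [mul_assoc, ← Real.rpow_add hx0]
          have he : -(1 + s) + lam = lam - 1 - s := by ring
          rw [he]
  -- finiteness of the reduced integral
  have hfin : (∫⁻ x in I, ENNReal.ofReal (C * x ^ (lam - 1 - s))) < ⊤ := by
    have hint : IntegrableOn (fun x : ℝ => C * x ^ (lam - 1 - s)) I := by
      rw [hI]
      exact ((intervalIntegral.integrableOn_Ioo_rpow_iff he1pos).mpr (by linarith)).const_mul C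
    exact hint.lintegral_lt_top
  -- bound for the single integral
  have hE1 : (∫⁻ x in I, ∫⁻ y in I, A y x) ≤
      ∫⁻ x in I, ENNReal.ofReal (C * x ^ (lam - 1 - s)) := by
    refine setLIntegral_mono' measurableSet_Ioo fun x hx => ?_
    have hind : ∀ y : ℝ, A y x = (Set.Iio (x ^ lam)).indicator (fun _ => H x) y := by
      intro y; rw [hA]; simp [Set.indicator_apply, Set.mem_Iio]
    calc (∫⁻ y in I, A y x)
        = ∫⁻ y in I, (Set.Iio (x ^ lam)).indicator (fun _ => H x) y := by
          exact lintegral_congr fun y => by rw [hind y]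
      _ = H x * (volume.restrict I) (Set.Iio (x ^ lam)) := by
          rw [lintegral_indicator measurableSet_Iio, setLIntegral_const]
      _ ≤ H x * ENNReal.ofReal (x ^ lam) := by
          apply mul_le_mul_right
          rw [Measure.restrict_apply measurableSet_Iio]
          refine le_trans (measure_mono (show Set.Iio (x ^ lam) ∩ I ⊆
            Set.Ioo (0 : ℝ) (x ^ lam) from fun y hy => ⟨hy.2.1, hy.1⟩)) ?_
          rw [Real.volume_Ioo, sub_zero]
      _ ≤ ENNReal.ofReal (C * x ^ (lam - 1 - s)) := hpoint x hx
  have hE : (∫⁻ x in I, ∫⁻ y in I, A y x) < ⊤ := lt_of_le_of_lt hE1 hfin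
  -- main chain
  calc (∫⁻ x in I, ∫⁻ y in I,
      (if 1 < |(Real.log lam)⁻¹ * Real.log (Real.log (1 / x)) -
            (Real.log lam)⁻¹ * Real.log (Real.log (1 / y))| then
        ENNReal.ofReal (|x - y| ^ (-(1 + s))) else 0))
      ≤ ∫⁻ x in I, ∫⁻ y in I, (A x y + A y x) := by
        refine setLIntegral_mono' measurableSet_Ioo fun x hx => ?_
        refine setLIntegral_mono' measurableSet_Ioo fun y hy => ?_
        split_ifs with hc
        · rcases hsplit x hx y hy hc with ⟨h1, h2⟩ | ⟨h1, h2⟩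
          · refine le_trans ?_ le_self_add
            have hxy : A x y = H y := by rw [hA]; simp [h1]
            rw [hxy]
            exact hb x hx y hy h1 h2
          · refine le_trans ?_ le_add_self
            have hxy : A y x = H x := by rw [hA]; simp [h1]
            rw [hxy]
            have habs : |x - y| = |y - x| := abs_sub_comm x y
            rw [habs]
            exact hb y hy x hx h1 h2
        · exact zero_le
    _ = (∫⁻ x in I, ∫⁻ y in I, A x y) + ∫⁻ x in I, ∫⁻ y in I, A y x := by
        have hinner : ∀ x : ℝ, (∫⁻ y in I, (A x y + A y x)) =
            (∫⁻ y in I, A x y) + ∫⁻ y in I, A y x :=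
          fun x => lintegral_add_left (hmeasA.comp measurable_prodMk_left) _
        rw [lintegral_congr hinner]
        exact lintegral_add_left (Measurable.lintegral_prod_right' hmeasA) _
    _ = (∫⁻ x in I, ∫⁻ y in I, A y x) + ∫⁻ x in I, ∫⁻ y in I, A y x := by
        rw [lintegral_lintegral_swap hmeasA.aemeasurable]
    _ < ⊤ := ENNReal.add_lt_top.mpr ⟨hE, hE⟩
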